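/- arXiv:1004.5146 — 2 statements merged into one kernel-verified Lean document; each statement's English description precedes it below -/
import Mathlib

section
/- Let $1<\alpha<2$, $n\geq 2$, $0\leq x<1$, and $h\in S^{n-1}$ with last coordinate $h_n$. Write $p=\frac{\alpha-1}{2}$ and let $\mathbf{x}=(0,\ldots,0,x)\in\mathbb{R}^n$. Then the principal value integral $g(x,h):=\mathrm{p.v.}\int_{-xh_n-\sqrt{x^2h_n^2-x^2+1}}^{-xh_n+\sqrt{x^2h_n^2-x^2+1}} \frac{(1-|\mathbf{x}|^2)^p - (1-|\mathbf{x}+th|^2)^p}{|t|^{1+\alpha}}\,dt$ satisfies $g(x,h) = (1-x^2+x^2h_n^2)^{-1/2}\,\big(-L_{(-1,1)}w_1\big)\!\left(\frac{xh_n}{\sqrt{1-x^2+x^2h_n^2}}\right)$, where $w_1(s)=(1-s^2)^{(\alpha-1)/2}$ on $(-1,1)$. -/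
open MeasureTheory Metric Set Filter
open scoped ENNReal Topology

-- continuity of t ↦ u(t)^p for p > 0
private lemma cont_rpow_pos {p : ℝ} (hp : 0 < p) {u : ℝ → ℝ} (hu : Continuous u) :
    Continuous fun y => u y ^ p := by
  rw [continuous_iff_continuousAt]
  intro y
  exact (Real.continuousAt_rpow_const _ _ (Or.inr hp.le)).comp hu.continuousAt

private lemma contDiffAt_w {p : ℝ} {y : ℝ} (hy : y ∈ Ioo (-1:ℝ) 1) :
    ContDiffAt ℝ 2 (fun y : ℝ => (1 - y ^ 2) ^ p) y := by
  apply ContDiffAt.rpow_const_of_ne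
  · exact (contDiff_const.sub (contDiff_id.pow 2)).contDiffAt
  · obtain ⟨h1, h2⟩ := hy; nlinarith

private lemma quad_bound {s₀ : ℝ} (hs₀ : s₀ ∈ Ioo (-1:ℝ) 1) (p : ℝ) :
    ∃ δ : ℝ, 0 < δ ∧ Icc (s₀ - δ) (s₀ + δ) ⊆ Ioo (-1:ℝ) 1 ∧ ∃ M : ℝ, 0 ≤ M ∧
      ∀ y, |y - s₀| ≤ δ →
        |(1 - y^2)^p - (1 - s₀^2)^p - deriv (fun z : ℝ => (1 - z^2)^p) s₀ * (y - s₀)|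
          ≤ M * |y - s₀|^2 := by
  set f := fun z : ℝ => (1 - z^2)^p with hf
  have hf2 : ContDiffOn ℝ 2 f (Ioo (-1:ℝ) 1) := fun y hy => (contDiffAt_w hy).contDiffWithinAt
  have hdf : ContDiffOn ℝ 1 (deriv f) (Ioo (-1:ℝ) 1) :=
    hf2.deriv_of_isOpen isOpen_Ioo (by norm_num)
  have hdfat : ContDiffAt ℝ 1 (deriv f) s₀ := hdf.contDiffAt (isOpen_Ioo.mem_nhds hs₀)
  obtain ⟨M, t, ht, hlip⟩ := hdfat.exists_lipschitzOnWith
  obtain ⟨r, hr, hball⟩ := Metric.mem_nhds_iff.mp (inter_mem ht (isOpen_Ioo.mem_nhds hs₀))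
  refine ⟨r/2, by positivity, ?_, M, M.2, ?_⟩
  · intro y hy
    have : y ∈ ball s₀ r := by
      rw [mem_ball, Real.dist_eq]
      rw [mem_Icc] at hy
      rw [abs_lt]; constructor <;> [linarith; linarith]
    exact (hball this).2
  · intro y hyδ
    set K := deriv f s₀ with hK
    set R := fun z => f z - f s₀ - K * (z - s₀) with hR
    have huIccIcc : uIcc s₀ y ⊆ Icc (s₀ - r/2) (s₀ + r/2) := by
      apply uIcc_subset_Icc
      · constructor <;> [linarith; linarith]
      · have := abs_le.mp hyδ
        constructor <;> [linarith [this.1]; linarith [this.2]]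
    have hIccball : Icc (s₀ - r/2) (s₀ + r/2) ⊆ ball s₀ r := by
      intro z hz
      rw [mem_ball, Real.dist_eq]
      rw [mem_Icc] at hz
      rw [abs_lt]; constructor <;> [linarith; linarith]
    have hsub : uIcc s₀ y ⊆ ball s₀ r := huIccIcc.trans hIccball
    have key : ‖R y - R s₀‖ ≤ ((M : ℝ) * |y - s₀|) * ‖y - s₀‖ := by
      apply Convex.norm_image_sub_le_of_norm_hasDerivWithin_le
        (f' := fun z => deriv f z - K)
      · intro z hz
        have hzIoo : z ∈ Ioo (-1:ℝ) 1 := (hball (hsub hz)).2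
        have hdiff : HasDerivAt f (deriv f z) z :=
          ((contDiffAt_w hzIoo).differentiableAt (by norm_num)).hasDerivAt
        have : HasDerivAt R (deriv f z - K * 1) z :=
          (hdiff.sub_const (f s₀)).sub (((hasDerivAt_id z).sub_const s₀).const_mul K)
        simpa using this.hasDerivWithinAt
      · intro z hz
        have hz' : z ∈ t := (hball (hsub hz)).1
        have hs' : s₀ ∈ t := (hball (Metric.mem_ball_self hr)).1
        have hd := hlip.dist_le_mul z hz' s₀ hs'
        rw [Real.dist_eq, Real.dist_eq] at hd
        have hzy : |z - s₀| ≤ |y - s₀| := by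
          rcases le_total s₀ y with hc | hc
          · rw [uIcc_of_le hc] at hz
            rw [mem_Icc] at hz
            rw [abs_of_nonneg (by linarith [hz.1]), abs_of_nonneg (by linarith)]
            linarith [hz.2]
          · rw [uIcc_of_ge hc] at hz
            rw [mem_Icc] at hz
            rw [abs_of_nonpos (by linarith [hz.2]), abs_of_nonpos (by linarith)]
            linarith [hz.1]
        calc ‖deriv f z - K‖ ≤ (M:ℝ) * |z - s₀| := hd
          _ ≤ (M:ℝ) * |y - s₀| := by
              apply mul_le_mul_of_nonneg_left hzy M.2
      · exact convex_uIcc _ _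
      · exact left_mem_uIcc
      · exact right_mem_uIcc
    have hRs₀ : R s₀ = 0 := by simp [hR]
    rw [hRs₀, sub_zero] at key
    have : ‖R y‖ = |f y - f s₀ - K * (y - s₀)| := rfl
    calc |f y - f s₀ - K * (y - s₀)| ≤ ((M:ℝ) * |y - s₀|) * ‖y - s₀‖ := key
      _ = (M:ℝ) * |y - s₀|^2 := by rw [Real.norm_eq_abs]; ring

set_option maxHeartbeats 1000000 in
private lemma pv_exists (α : ℝ) (hα1 : 1 < α) (hα2 : α < 2) (s₀ : ℝ) (hs₀ : s₀ ∈ Ioo (-1:ℝ) 1) :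
    ∃ L : ℝ, Tendsto (fun ε : ℝ =>
        ∫ y in Ioo (-1:ℝ) 1 ∩ {y : ℝ | ε < |y - s₀|},
          ((1 - y ^ 2) ^ ((α - 1)/2) - (1 - s₀ ^ 2) ^ ((α - 1)/2)) / |s₀ - y| ^ (1 + α))
      (𝓝[>] (0:ℝ)) (𝓝 L) := by
  have hp : 0 < (α - 1)/2 := by linarith
  set p := (α - 1)/2 with hpdef
  set f : ℝ → ℝ := fun y => (1 - y ^ 2) ^ p with hfdef
  set K : ℝ := deriv f s₀ with hKdef
  obtain ⟨δ, hδ, hIcc, M, hM, hquad⟩ := quad_bound hs₀ p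
  set g : ℝ → ℝ := fun y => (f y - f s₀) / |s₀ - y| ^ (1 + α) with hgdef
  set odd : ℝ → ℝ := fun y => (K * (y - s₀)) / |s₀ - y| ^ (1 + α) with hodddef
  set q : ℝ → ℝ := fun y => (f y - f s₀ - K * (y - s₀)) / |s₀ - y| ^ (1 + α) with hqdef
  -- continuity facts
  have hfc : Continuous f := cont_rpow_pos hp (by fun_prop)
  have habs : Continuous fun y : ℝ => |y - s₀| := (continuous_id.sub continuous_const).abs
  have hdenc : Continuous (fun y : ℝ => |s₀ - y| ^ (1 + α)) :=
    cont_rpow_pos (by linarith) ((continuous_const.sub continuous_id).abs)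
  have hden_pos : ∀ y : ℝ, y ≠ s₀ → 0 < |s₀ - y| ^ (1 + α) := by
    intro y hy
    exact Real.rpow_pos_of_pos (abs_pos.2 (sub_ne_zero.2 (Ne.symm hy))) _
  -- generic integrability on compact sets avoiding s₀
  have hint : ∀ num : ℝ → ℝ, Continuous num → ∀ k : Set ℝ, IsCompact k → (∀ z ∈ k, z ≠ s₀) →
      IntegrableOn (fun y => num y / |s₀ - y| ^ (1 + α)) k := by
    intro num hnum k hk hks
    apply ContinuousOn.integrableOn_compact hk
    intro z hz
    exact ((hnum.continuousAt.div hdenc.continuousAt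
      (hden_pos z (hks z hz)).ne')).continuousWithinAt
  have hgnum : Continuous fun y => f y - f s₀ := hfc.sub continuous_const
  have hoddnum : Continuous fun y : ℝ => K * (y - s₀) :=
    continuous_const.mul (continuous_id.sub continuous_const)
  have hqnum : Continuous fun y => f y - f s₀ - K * (y - s₀) := hgnum.sub hoddnum
  have hq_meas : Measurable q := hqnum.measurable.div hdenc.measurable
  -- the sets
  set Sout : Set ℝ := Ioo (-1:ℝ) 1 ∩ {y | δ ≤ |y - s₀|} with hSoutdef
  set Ann : ℝ → Set ℝ := fun ε => {y | ε < |y - s₀| ∧ |y - s₀| < δ} with hAnndef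
  set Ball : Set ℝ := {y | 0 < |y - s₀| ∧ |y - s₀| < δ} with hBalldef
  have hSoutm : MeasurableSet Sout :=
    measurableSet_Ioo.inter (isClosed_le continuous_const habs).measurableSet
  have hAnnm : ∀ ε : ℝ, MeasurableSet (Ann ε) := fun ε =>
    ((isOpen_lt continuous_const habs).inter (isOpen_lt habs continuous_const)).measurableSet
  have hBallm : MeasurableSet Ball :=
    ((isOpen_lt continuous_const habs).inter (isOpen_lt habs continuous_const)).measurableSet
  -- compact supersets
  have houtk : IsCompact (Icc (-1:ℝ) 1 ∩ {y | δ ≤ |y - s₀|}) :=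
    isCompact_Icc.inter_right (isClosed_le continuous_const habs)
  have houtne : ∀ z ∈ Icc (-1:ℝ) 1 ∩ {y | δ ≤ |y - s₀|}, z ≠ s₀ := by
    intro z hz hzs
    have : (0:ℝ) < |z - s₀| := lt_of_lt_of_le hδ hz.2
    rw [hzs, sub_self, abs_zero] at this
    exact lt_irrefl _ this
  have hannk : ∀ ε : ℝ, IsCompact (Icc (s₀ - δ) (s₀ + δ) ∩ {y | ε ≤ |y - s₀|}) := fun ε =>
    isCompact_Icc.inter_right (isClosed_le continuous_const habs)
  have hannne : ∀ ε : ℝ, 0 < ε → ∀ z ∈ Icc (s₀ - δ) (s₀ + δ) ∩ {y | ε ≤ |y - s₀|}, z ≠ s₀ := by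
    intro ε hε z hz hzs
    have : (0:ℝ) < |z - s₀| := lt_of_lt_of_le hε hz.2
    rw [hzs, sub_self, abs_zero] at this
    exact lt_irrefl _ this
  have hAnnSub : ∀ ε : ℝ, Ann ε ⊆ Icc (s₀ - δ) (s₀ + δ) ∩ {y | ε ≤ |y - s₀|} := by
    intro ε y hy
    have h2 := abs_le.mp hy.2.le
    exact ⟨⟨by linarith [h2.1], by linarith [h2.2]⟩, hy.1.le⟩
  have hAnnIoo : ∀ ε : ℝ, Ann ε ⊆ Ioo (-1:ℝ) 1 := by
    intro ε y hy
    have h2 := abs_le.mp hy.2.le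
    exact hIcc ⟨by linarith [h2.1], by linarith [h2.2]⟩
  -- integrability
  have hgSout : IntegrableOn g Sout :=
    (hint _ hgnum _ houtk houtne).mono_set (fun y hy => ⟨Ioo_subset_Icc_self hy.1, hy.2⟩)
  have hgAnn : ∀ ε : ℝ, 0 < ε → IntegrableOn g (Ann ε) := fun ε hε =>
    (hint _ hgnum _ (hannk ε) (hannne ε hε)).mono_set (hAnnSub ε)
  have hoddAnn : ∀ ε : ℝ, 0 < ε → IntegrableOn odd (Ann ε) := fun ε hε =>
    (hint _ hoddnum _ (hannk ε) (hannne ε hε)).mono_set (hAnnSub ε)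
  have hqAnn : ∀ ε : ℝ, 0 < ε → IntegrableOn q (Ann ε) := fun ε hε =>
    (hint _ hqnum _ (hannk ε) (hannne ε hε)).mono_set (hAnnSub ε)
  -- decomposition of the domain
  have hdecomp : ∀ ε : ℝ, 0 < ε → ε < δ →
      Ioo (-1:ℝ) 1 ∩ {y : ℝ | ε < |y - s₀|} = Sout ∪ Ann ε := by
    intro ε hε1 hε2
    ext y
    simp only [hSoutdef, hAnndef, mem_inter_iff, mem_setOf_eq, mem_union, mem_Ioo]
    constructor
    · rintro ⟨hy1, hy2⟩
      rcases lt_or_ge (|y - s₀|) δ with hlt | hge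
      · exact Or.inr ⟨hy2, hlt⟩
      · exact Or.inl ⟨hy1, hge⟩
    · rintro (⟨hy1, hy2⟩ | ⟨hy1, hy2⟩)
      · exact ⟨hy1, lt_of_lt_of_le hε2 hy2⟩
      · exact ⟨hAnnIoo ε ⟨hy1, hy2⟩, hy1⟩
  have hdisj : ∀ ε : ℝ, Disjoint Sout (Ann ε) := by
    intro ε
    rw [Set.disjoint_left]
    intro y hy hy'
    exact absurd hy'.2 (not_lt.mpr hy.2)
  -- the odd part integrates to zero
  have hodd_zero : ∀ ε : ℝ, 0 < ε → ε < δ → ∫ y in Ann ε, odd y = 0 := by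
    intro ε hε1 hε2
    have hset : Ann ε = Ioo (s₀ - δ) (s₀ - ε) ∪ Ioo (s₀ + ε) (s₀ + δ) := by
      ext y
      simp only [hAnndef, mem_setOf_eq, mem_union, mem_Ioo]
      constructor
      · rintro ⟨h1, h2⟩
        rcases le_total s₀ y with hc | hc
        · right
          rw [abs_of_nonneg (by linarith)] at h1 h2
          exact ⟨by linarith, by linarith⟩
        · left
          rw [abs_of_nonpos (by linarith)] at h1 h2
          exact ⟨by linarith, by linarith⟩
      · rintro (⟨h1, h2⟩ | ⟨h1, h2⟩)
        · rw [abs_of_nonpos (by linarith)]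
          exact ⟨by linarith, by linarith⟩
        · rw [abs_of_nonneg (by linarith)]
          exact ⟨by linarith, by linarith⟩
    have hd2 : Disjoint (Ioo (s₀ - δ) (s₀ - ε)) (Ioo (s₀ + ε) (s₀ + δ)) := by
      rw [Set.disjoint_left]
      intro y hy hy'
      rw [mem_Ioo] at hy hy'
      linarith [hy.2, hy'.1]
    have hi1 : IntegrableOn odd (Ioo (s₀ - δ) (s₀ - ε)) := by
      apply (hoddAnn ε hε1).mono_set
      rw [hset]; exact subset_union_left
    have hi2 : IntegrableOn odd (Ioo (s₀ + ε) (s₀ + δ)) := by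
      apply (hoddAnn ε hε1).mono_set
      rw [hset]; exact subset_union_right
    rw [hset, setIntegral_union hd2 measurableSet_Ioo hi1 hi2]
    have h1 : ∫ y in Ioo (s₀ + ε) (s₀ + δ), odd y = ∫ u in ε..δ, odd (u + s₀) := by
      rw [intervalIntegral.integral_comp_add_right (fun y => odd y) s₀,
        intervalIntegral.integral_of_le (by linarith), integral_Ioc_eq_integral_Ioo,
        add_comm ε s₀, add_comm δ s₀]
    have h2 : ∫ y in Ioo (s₀ - δ) (s₀ - ε), odd y = ∫ u in (-δ)..(-ε), odd (u + s₀) := by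
      rw [intervalIntegral.integral_comp_add_right (fun y => odd y) s₀,
        intervalIntegral.integral_of_le (by linarith), integral_Ioc_eq_integral_Ioo,
        neg_add_eq_sub, neg_add_eq_sub, sub_eq_neg_add, sub_eq_neg_add]
    have h3 : ∫ u in (-δ)..(-ε), odd (u + s₀) = ∫ u in ε..δ, odd (-u + s₀) := by
      rw [intervalIntegral.integral_comp_neg (fun u => odd (u + s₀))]
    have h4 : ∀ u : ℝ, odd (-u + s₀) = - odd (u + s₀) := by
      intro u
      simp only [hodddef]
      have e1 : -u + s₀ - s₀ = -u := by ring
      have e2 : s₀ - (-u + s₀) = u := by ring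
      have e3 : u + s₀ - s₀ = u := by ring
      have e4 : s₀ - (u + s₀) = -u := by ring
      rw [e1, e2, e3, e4, abs_neg, mul_neg, neg_div]
    rw [h1, h2, h3]
    have : (∫ u in ε..δ, odd (-u + s₀)) = ∫ u in ε..δ, - odd (u + s₀) := by
      simp only [h4]
    rw [this, intervalIntegral.integral_neg]
    ring
  -- pointwise bound on q
  have hqb : ∀ y : ℝ, |y - s₀| < δ → |q y| ≤ M * |y - s₀| ^ (1 - α) := by
    intro y hyδ
    rcases eq_or_ne y s₀ with rfl | hys
    · simp only [hqdef, sub_self, abs_zero, mul_zero, sub_zero]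
      rw [Real.zero_rpow (by linarith : (1:ℝ) - α ≠ 0)]
      simp
    · have hpos := hden_pos y hys
      have habs' : |s₀ - y| = |y - s₀| := abs_sub_comm _ _
      have hnum := hquad y hyδ.le
      have habspos : 0 < |y - s₀| := abs_pos.2 (sub_ne_zero.2 hys)
      have hpos' : 0 < |y - s₀| ^ (1 + α) := Real.rpow_pos_of_pos habspos _
      have h1 : |q y| = |f y - f s₀ - K * (y - s₀)| / |y - s₀| ^ (1 + α) := by
        simp only [hqdef]
        rw [abs_div, abs_of_pos hpos, habs']
      rw [h1]
      calc |f y - f s₀ - K * (y - s₀)| / |y - s₀| ^ (1 + α)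
          ≤ (M * |y - s₀| ^ 2) / |y - s₀| ^ (1 + α) := by
            gcongr
        _ = M * (|y - s₀| ^ (2:ℕ) / |y - s₀| ^ (1 + α)) := by rw [mul_div_assoc]
        _ = M * |y - s₀| ^ (1 - α) := by
            congr 1
            rw [← Real.rpow_natCast |y - s₀| 2, ← Real.rpow_sub habspos]
            congr 1
            push_cast
            ring
  -- integrable bound on the punctured ball
  have hBint : IntegrableOn (fun y => M * |y - s₀| ^ (1 - α)) (Ioo (s₀ - δ) (s₀ + δ)) := by
    have base : IntervalIntegrable (fun u : ℝ => u ^ (1 - α)) volume 0 δ :=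
      intervalIntegral.intervalIntegrable_rpow' (by linarith)
    have r1 := (base.comp_sub_right s₀).1
    rw [zero_add, add_comm δ s₀] at r1
    have r1abs : IntegrableOn (fun y => |y - s₀| ^ (1 - α)) (Ioc s₀ (s₀ + δ)) := by
      apply r1.congr_fun ?_ measurableSet_Ioc
      intro y hy
      show (y - s₀) ^ (1 - α) = |y - s₀| ^ (1 - α)
      rw [abs_of_nonneg (by linarith [hy.1] : (0:ℝ) ≤ y - s₀)]
    have base2 := (IntervalIntegrable.iff_comp_neg).mp base
    have r2 := (base2.comp_sub_right s₀).2
    rw [neg_zero, zero_add, neg_add_eq_sub] at r2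
    have r2abs : IntegrableOn (fun y => |y - s₀| ^ (1 - α)) (Ioc (s₀ - δ) s₀) := by
      apply r2.congr_fun ?_ measurableSet_Ioc
      intro y hy
      show (-(y - s₀)) ^ (1 - α) = |y - s₀| ^ (1 - α)
      rw [abs_of_nonpos (by linarith [hy.2] : y - s₀ ≤ 0)]
    have hun : IntegrableOn (fun y => |y - s₀| ^ (1 - α))
        (Ioc (s₀ - δ) s₀ ∪ Ioc s₀ (s₀ + δ)) := r2abs.union r1abs
    have hsub : Ioo (s₀ - δ) (s₀ + δ) ⊆ Ioc (s₀ - δ) s₀ ∪ Ioc s₀ (s₀ + δ) := by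
      intro y hy
      rcases le_or_gt y s₀ with hc | hc
      · exact Or.inl ⟨hy.1, hc⟩
      · exact Or.inr ⟨hc, hy.2.le⟩
    exact (hun.mono_set hsub).const_mul M
  have hBall_sub : Ball ⊆ Ioo (s₀ - δ) (s₀ + δ) := by
    intro y hy
    have := abs_lt.mp hy.2
    exact ⟨by linarith [this.1], by linarith [this.2]⟩
  have hqBall : IntegrableOn q Ball := by
    apply Integrable.mono' (hBint.mono_set hBall_sub) hq_meas.aestronglyMeasurable
    rw [ae_restrict_iff' hBallm]
    exact ae_of_all _ fun y hy => by rw [Real.norm_eq_abs]; exact hqb y hy.2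
  -- dominated convergence
  have hTend : Tendsto (fun ε => ∫ y in Ann ε, q y) (𝓝[>] (0:ℝ)) (𝓝 (∫ y in Ball, q y)) := by
    have heq : ∀ ε : ℝ, ∫ y in Ann ε, q y = ∫ y, (Ann ε).indicator q y := fun ε =>
      (integral_indicator (hAnnm ε)).symm
    have heqB : ∫ y in Ball, q y = ∫ y, Ball.indicator q y := (integral_indicator hBallm).symm
    rw [heqB]
    simp_rw [heq]
    apply tendsto_integral_filter_of_dominated_convergence
      (bound := Ball.indicator (fun y => M * |y - s₀| ^ (1 - α)))
    · exact Eventually.of_forall fun ε => (hq_meas.indicator (hAnnm ε)).aestronglyMeasurable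
    · filter_upwards [self_mem_nhdsWithin] with ε hε
      apply ae_of_all
      intro y
      by_cases hy : y ∈ Ann ε
      · rw [indicator_of_mem hy]
        have hyB : y ∈ Ball := ⟨lt_trans hε hy.1, hy.2⟩
        rw [indicator_of_mem hyB, Real.norm_eq_abs]
        exact hqb y hy.2
      · rw [indicator_of_notMem hy, norm_zero]
        apply indicator_nonneg
        intro z hz
        have : (0:ℝ) ≤ |z - s₀| ^ (1 - α) := Real.rpow_nonneg (abs_nonneg _) _
        exact mul_nonneg hM this
    · exact (hBint.mono_set hBall_sub).integrable_indicator hBallm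
    · apply ae_of_all
      intro y
      by_cases hy : y ∈ Ball
      · rw [indicator_of_mem hy]
        apply Tendsto.congr' ?_ tendsto_const_nhds
        filter_upwards [Ioo_mem_nhdsGT_of_mem ⟨le_refl (0:ℝ), hy.1⟩] with ε hε
        have hyA : y ∈ Ann ε := ⟨hε.2, hy.2⟩
        rw [indicator_of_mem hyA]
      · rw [indicator_of_notMem hy]
        apply Tendsto.congr' ?_ tendsto_const_nhds
        filter_upwards [self_mem_nhdsWithin] with ε hε
        rw [indicator_of_notMem]
        intro hc
        exact hy ⟨lt_trans hε hc.1, hc.2⟩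
  -- assemble
  refine ⟨(∫ y in Sout, g y) + ∫ y in Ball, q y, ?_⟩
  have hfinal := (tendsto_const_nhds (x := ∫ y in Sout, g y)).add hTend
  apply Tendsto.congr' ?_ hfinal
  filter_upwards [Ioo_mem_nhdsGT_of_mem ⟨le_refl (0:ℝ), hδ⟩] with ε hε
  obtain ⟨hε1, hε2⟩ := hε
  show (∫ y in Sout, g y) + ∫ y in Ann ε, q y
      = ∫ y in Ioo (-1:ℝ) 1 ∩ {y : ℝ | ε < |y - s₀|}, g y
  rw [hdecomp ε hε1 hε2, setIntegral_union (hdisj ε) (hAnnm ε) hgSout (hgAnn ε hε1)]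
  congr 1
  have hsplit : ∀ y : ℝ, g y = odd y + q y := by
    intro y
    simp only [hgdef, hodddef, hqdef]
    rw [← add_div]
    congr 1
    ring
  have hgq : ∫ y in Ann ε, g y = (∫ y in Ann ε, odd y) + ∫ y in Ann ε, q y := by
    rw [← integral_add (hoddAnn ε hε1) (hqAnn ε hε1)]
    exact integral_congr_ae (ae_of_all _ fun y => hsplit y)
  rw [hgq, hodd_zero ε hε1 hε2, zero_add]


set_option maxHeartbeats 1000000 in
/-- Reduction of the one-dimensional section integral `g(x,h)` to the regional
fractional Laplacian of `w₁(s) = (1-s²)^{(α-1)/2}` on `(-1,1)`: the principal value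
`L_{(-1,1)} w₁` exists at the point `x h_n / √(1-x²+x²h_n²)` with value `L₁`, and the
principal value defining `g(x,h)` exists and equals
`(1-x²+x²h_n²)^{-1/2} · (-L₁) `. -/
theorem section_integral_eq (n : ℕ) (hn : 2 ≤ n) (α : ℝ) (hα1 : 1 < α) (hα2 : α < 2)
    (x : ℝ) (hx0 : 0 ≤ x) (hx1 : x < 1) (h : EuclideanSpace ℝ (Fin n))
    (hh : h ∈ sphere (0 : EuclideanSpace ℝ (Fin n)) 1)
    (hcoord : ℝ) (hhn : hcoord = h ⟨n - 1, by omega⟩)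
    (xx : EuclideanSpace ℝ (Fin n)) (hxx : xx = EuclideanSpace.single ⟨n - 1, by omega⟩ x) :
    ∃ L₁ : ℝ,
      Tendsto (fun ε : ℝ =>
          ∫ y in Ioo (-1 : ℝ) 1 ∩
              {y : ℝ | ε < |y - x * hcoord / Real.sqrt (1 - x ^ 2 + x ^ 2 * hcoord ^ 2)|},
            ((1 - y ^ 2) ^ ((α - 1) / 2) -
              (1 - (x * hcoord / Real.sqrt (1 - x ^ 2 + x ^ 2 * hcoord ^ 2)) ^ 2) ^
                ((α - 1) / 2)) /
            |x * hcoord / Real.sqrt (1 - x ^ 2 + x ^ 2 * hcoord ^ 2) - y| ^ (1 + α))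
        (𝓝[>] (0 : ℝ)) (𝓝 L₁) ∧
      Tendsto (fun ε : ℝ =>
          ∫ t in Ioo (-x * hcoord - Real.sqrt (x ^ 2 * hcoord ^ 2 - x ^ 2 + 1))
              (-x * hcoord + Real.sqrt (x ^ 2 * hcoord ^ 2 - x ^ 2 + 1)) ∩
              {t : ℝ | ε < |t|},
            ((1 - ‖xx‖ ^ 2) ^ ((α - 1) / 2) - (1 - ‖xx + t • h‖ ^ 2) ^ ((α - 1) / 2)) /
              |t| ^ (1 + α))
        (𝓝[>] (0 : ℝ))
        (𝓝 ((1 - x ^ 2 + x ^ 2 * hcoord ^ 2) ^ (-(1 : ℝ) / 2) * (-L₁))) := by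
  have hc2 : (0:ℝ) < 1 - x ^ 2 + x ^ 2 * hcoord ^ 2 := by nlinarith [sq_nonneg (x * hcoord)]
  set c := Real.sqrt (1 - x ^ 2 + x ^ 2 * hcoord ^ 2) with hcdef
  have hc : 0 < c := Real.sqrt_pos.mpr hc2
  have hcsq : c ^ 2 = 1 - x ^ 2 + x ^ 2 * hcoord ^ 2 := Real.sq_sqrt hc2.le
  set s₀ := x * hcoord / c with hs₀def
  have hcs₀ : c * s₀ = x * hcoord := by
    rw [hs₀def]; field_simp
  have hs₀sq : s₀ ^ 2 < 1 := by
    rw [hs₀def, div_pow, div_lt_one (by positivity)]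
    rw [hcsq]
    nlinarith
  have hs₀ : s₀ ∈ Ioo (-1:ℝ) 1 := by
    constructor
    · nlinarith [sq_nonneg (s₀ + 1)]
    · nlinarith [sq_nonneg (s₀ - 1)]
  obtain ⟨L₁, hL₁⟩ := pv_exists α hα1 hα2 s₀ hs₀
  refine ⟨L₁, hL₁, ?_⟩
  have hsq2 : Real.sqrt (x ^ 2 * hcoord ^ 2 - x ^ 2 + 1) = c := by
    rw [hcdef]; congr 1; ring
  simp only [hsq2]
  -- norms
  have hnormh : ‖h‖ = 1 := by rwa [mem_sphere_zero_iff_norm] at hh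
  have hnormxx : ‖xx‖ = x := by
    rw [hxx, EuclideanSpace.norm_single, Real.norm_eq_abs, abs_of_nonneg hx0]
  have hinner : ∀ t : ℝ, (inner ℝ xx (t • h) : ℝ) = t * (x * hcoord) := by
    intro t
    rw [real_inner_smul_right, hxx, EuclideanSpace.inner_single_left]
    rw [hhn]
    simp only [conj_trivial]
  have hnormsq : ∀ t : ℝ, ‖xx + t • h‖ ^ 2 = x ^ 2 + 2 * (t * (x * hcoord)) + t ^ 2 := by
    intro t
    rw [norm_add_sq_real, hnormxx, hinner, norm_smul, hnormh, Real.norm_eq_abs, mul_one, sq_abs]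
  -- the scalar identity
  have hscal : c * (1 - x ^ 2 + x ^ 2 * hcoord ^ 2) ^ ((α - 1) / 2) / c ^ (1 + α)
      = (1 - x ^ 2 + x ^ 2 * hcoord ^ 2) ^ (-(1:ℝ) / 2) := by
    rw [← hcsq, ← Real.rpow_natCast c 2, ← Real.rpow_mul hc.le, ← Real.rpow_mul hc.le]
    nth_rewrite 1 [← Real.rpow_one c]
    rw [← Real.rpow_add hc, ← Real.rpow_sub hc]
    congr 1
    push_cast
    ring
  have h2 : (1 : ℝ) - x ^ 2 = (1 - x ^ 2 + x ^ 2 * hcoord ^ 2) * (1 - s₀ ^ 2) := by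
    linear_combination (c * s₀ + x * hcoord) * hcs₀ + (-(s₀ ^ 2)) * hcsq
  -- the change-of-variables identity
  have H : ∀ ε : ℝ,
      (∫ t in Ioo (-x * hcoord - c) (-x * hcoord + c) ∩ {t : ℝ | ε < |t|},
        ((1 - ‖xx‖ ^ 2) ^ ((α - 1) / 2) - (1 - ‖xx + t • h‖ ^ 2) ^ ((α - 1) / 2)) /
          |t| ^ (1 + α))
      = (1 - x ^ 2 + x ^ 2 * hcoord ^ 2) ^ (-(1:ℝ) / 2) *
        (-(∫ y in Ioo (-1:ℝ) 1 ∩ {y : ℝ | ε / c < |y - s₀|},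
            ((1 - y ^ 2) ^ ((α - 1) / 2) - (1 - s₀ ^ 2) ^ ((α - 1) / 2)) /
              |s₀ - y| ^ (1 + α))) := by
    intro ε
    set S := Ioo (-1:ℝ) 1 ∩ {y : ℝ | ε / c < |y - s₀|} with hSdef
    have hSm : MeasurableSet S := measurableSet_Ioo.inter
      ((isOpen_lt continuous_const ((continuous_id.sub continuous_const).abs)).measurableSet)
    have himg : (fun y => c * y - x * hcoord) '' S
        = Ioo (-x * hcoord - c) (-x * hcoord + c) ∩ {t : ℝ | ε < |t|} := by
      ext t
      simp only [hSdef, mem_image, mem_inter_iff, mem_Ioo, mem_setOf_eq]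
      constructor
      · rintro ⟨y, ⟨⟨hy1, hy2⟩, hy3⟩, rfl⟩
        refine ⟨⟨by nlinarith, by nlinarith⟩, ?_⟩
        have e : c * y - x * hcoord = c * (y - s₀) := by rw [mul_sub, hcs₀]
        rw [e, abs_mul, abs_of_pos hc]
        calc ε = c * (ε / c) := by field_simp
          _ < c * |y - s₀| := by exact mul_lt_mul_of_pos_left hy3 hc
      · rintro ⟨⟨ht1, ht2⟩, ht3⟩
        refine ⟨(t + x * hcoord) / c, ⟨⟨?_, ?_⟩, ?_⟩, by field_simp; ring⟩
        · rw [lt_div_iff₀ hc]; linarith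
        · rw [div_lt_one hc]; linarith
        · have e : (t + x * hcoord) / c - s₀ = t / c := by
            rw [hs₀def]; field_simp; ring
          rw [e, abs_div, abs_of_pos hc, div_lt_div_iff₀ hc hc]
          exact mul_lt_mul_of_pos_right ht3 hc
    have hderiv : ∀ y ∈ S, HasDerivWithinAt (fun y => c * y - x * hcoord) c S y := by
      intro y hy
      simpa using (((hasDerivAt_id y).const_mul c).sub_const (x * hcoord)).hasDerivWithinAt
    have hinj : InjOn (fun y => c * y - x * hcoord) S := by
      intro u hu v hv huv
      simp only at huv
      have : c * u = c * v := by linarith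
      exact mul_left_cancel₀ hc.ne' this
    rw [← himg, integral_image_eq_integral_abs_deriv_smul hSm hderiv hinj]
    have hEq : EqOn
        (fun y => |c| • (((1 - ‖xx‖ ^ 2) ^ ((α - 1) / 2)
            - (1 - ‖xx + (c * y - x * hcoord) • h‖ ^ 2) ^ ((α - 1) / 2)) /
          |c * y - x * hcoord| ^ (1 + α)))
        (fun y => (1 - x ^ 2 + x ^ 2 * hcoord ^ 2) ^ (-(1:ℝ) / 2) *
          (-(((1 - y ^ 2) ^ ((α - 1) / 2) - (1 - s₀ ^ 2) ^ ((α - 1) / 2)) /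
            |s₀ - y| ^ (1 + α)))) S := by
      intro y hy
      have hyIoo : y ∈ Ioo (-1:ℝ) 1 := hy.1
      have h1y : (0:ℝ) ≤ 1 - y ^ 2 := by nlinarith [hyIoo.1, hyIoo.2]
      have h1s : (0:ℝ) ≤ 1 - s₀ ^ 2 := by nlinarith
      have h1' : 1 - (x ^ 2 + 2 * ((c * y - x * hcoord) * (x * hcoord)) + (c * y - x * hcoord) ^ 2)
          = (1 - x ^ 2 + x ^ 2 * hcoord ^ 2) * (1 - y ^ 2) := by
        linear_combination (-(y ^ 2)) * hcsq
      have h3 : |c * y - x * hcoord| = c * |y - s₀| := by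
        rw [show c * y - x * hcoord = c * (y - s₀) by rw [mul_sub, hcs₀], abs_mul, abs_of_pos hc]
      show |c| • (((1 - ‖xx‖ ^ 2) ^ ((α - 1) / 2)
            - (1 - ‖xx + (c * y - x * hcoord) • h‖ ^ 2) ^ ((α - 1) / 2)) /
          |c * y - x * hcoord| ^ (1 + α))
        = (1 - x ^ 2 + x ^ 2 * hcoord ^ 2) ^ (-(1:ℝ) / 2) *
          (-(((1 - y ^ 2) ^ ((α - 1) / 2) - (1 - s₀ ^ 2) ^ ((α - 1) / 2)) /
            |s₀ - y| ^ (1 + α)))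
      have e1 : (1 - ‖xx‖ ^ 2) ^ ((α - 1) / 2)
          = (1 - x ^ 2 + x ^ 2 * hcoord ^ 2) ^ ((α - 1) / 2) * (1 - s₀ ^ 2) ^ ((α - 1) / 2) := by
        rw [hnormxx, ← Real.mul_rpow hc2.le h1s, ← h2]
      have e2 : (1 - ‖xx + (c * y - x * hcoord) • h‖ ^ 2) ^ ((α - 1) / 2)
          = (1 - x ^ 2 + x ^ 2 * hcoord ^ 2) ^ ((α - 1) / 2) * (1 - y ^ 2) ^ ((α - 1) / 2) := by
        rw [hnormsq, ← Real.mul_rpow hc2.le h1y, ← h1']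
      have e3 : |c * y - x * hcoord| ^ (1 + α) = c ^ (1 + α) * |y - s₀| ^ (1 + α) := by
        rw [h3, Real.mul_rpow hc.le (abs_nonneg _)]
      rw [smul_eq_mul, e1, e2, e3, abs_of_pos hc, abs_sub_comm s₀ y]
      linear_combination (((1 - s₀ ^ 2) ^ ((α - 1) / 2) - (1 - y ^ 2) ^ ((α - 1) / 2)) /
        |y - s₀| ^ (1 + α)) * hscal
    rw [setIntegral_congr_fun hSm hEq]
    rw [integral_const_mul, integral_neg]
  -- conclude
  have hmap : Tendsto (fun ε : ℝ => ε / c) (𝓝[>] (0:ℝ)) (𝓝[>] (0:ℝ)) := by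
    have h1 : Tendsto (fun ε : ℝ => ε / c) (𝓝 (0:ℝ)) (𝓝 (0:ℝ)) := by
      have := (continuous_id.div_const c).tendsto (0:ℝ)
      simpa using this
    apply tendsto_nhdsWithin_of_tendsto_nhds_of_eventually_within _
      (h1.mono_left nhdsWithin_le_nhds)
    filter_upwards [self_mem_nhdsWithin] with ε hε
    exact div_pos hε hc
  have hcomp := hL₁.comp hmap
  have hfin := (hcomp.neg).const_mul ((1 - x ^ 2 + x ^ 2 * hcoord ^ 2) ^ (-(1:ℝ) / 2))
  exact hfin.congr fun ε => (H ε).symm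
end

section
/- Let $1<\alpha<2$, $n\geq 2$, let $B\subset\mathbb{R}^n$ be the open unit ball, $w_n(x)=(1-|x|^2)^{(\alpha-1)/2}$, $a_k=1-2^{-k}$, $B_k=B(0,a_k)$. Then for every measurable $v:B\to\mathbb{R}$ (with all integrals interpreted in $[0,\infty]$): $\int_B\int_B (v(x)-v(y))^2\,\frac{w_n(x)w_n(y)}{|x-y|^{n+\alpha}}\,dx\,dy + \int_B v^2(x)\,w_n^2(x)\,dx \;\geq\; \frac{\alpha-1}{2}\sum_{k=1}^{\infty}2^{-k(\alpha-1)}\left(\int_{B_k}\int_{B_k}\frac{(v(x)-v(y))^2}{|x-y|^{n+\alpha}}\,dx\,dy + \int_{B_k}v^2(x)\,dx\right)$. -/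
set_option maxHeartbeats 1000000

open MeasureTheory Metric Set Filter
open scoped ENNReal Topology


private lemma bern {p : ℝ} (hp0 : 0 < p) (hp1 : p < 1) : p / 2 ≤ 1 - (2:ℝ) ^ (-p) := by
  have h := rpow_one_add_le_one_add_mul_self (s := (-(1/2) : ℝ)) (by norm_num) hp0.le hp1.le
  have e1 : ((1:ℝ) + -(1/2)) = 1/2 := by norm_num
  rw [e1] at h
  have e2 : (2:ℝ) ^ (-p) = (1/2 : ℝ) ^ p := by
    rw [Real.rpow_neg (by norm_num : (0:ℝ) ≤ 2), one_div,
      Real.inv_rpow (by norm_num : (0:ℝ) ≤ 2)]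
  rw [e2]; linarith

private lemma ind_ne_top {X : Type*} (s : Set X) (x : X) :
    s.indicator (fun _ => (1:ℝ≥0∞)) x ≠ ∞ := by
  by_cases h : x ∈ s <;> simp [h]

private lemma ind_mul {X : Type*} (s : Set X) (f : X → ℝ≥0∞) (x : X) :
    s.indicator f x = s.indicator (fun _ => (1:ℝ≥0∞)) x * f x := by
  by_cases h : x ∈ s <;> simp [h]

private lemma tailSum {p : ℝ} (hp0 : 0 < p) (hp1 : p < 1) {t : ℝ} (ht : 0 < t) :
    ENNReal.ofReal (p / 2) * ∑' k : ℕ,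
      ({k : ℕ | (2:ℝ) ^ (-((k:ℝ) + 1)) < t}.indicator
        (fun k => ENNReal.ofReal ((2:ℝ) ^ (-((k:ℝ) + 1) * p))) k)
      ≤ ENNReal.ofReal (t ^ p) := by
  have h2 : (0:ℝ) < 2 := two_pos
  have hgeo_pos : (0:ℝ) < 1 - (2:ℝ) ^ (-p) := by
    have : (2:ℝ) ^ (-p) < 1 :=
      Real.rpow_lt_one_of_one_lt_of_neg (by norm_num : (1:ℝ) < 2) (by linarith)
    linarith
  have hconv : ∀ k : ℕ, (2:ℝ) ^ (-((k:ℝ) + 1)) = (1/2:ℝ) ^ (k + 1) := by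
    intro k
    have e : -((k:ℝ) + 1) = ((-1 : ℝ)) * ((k+1 : ℕ) : ℝ) := by push_cast; ring
    rw [e, Real.rpow_mul h2.le, Real.rpow_natCast, Real.rpow_neg_one]
    norm_num
  obtain ⟨N, hN⟩ := exists_pow_lt_of_lt_one ht (by norm_num : (1/2:ℝ) < 1)
  have hex : ∃ k : ℕ, (2:ℝ) ^ (-((k:ℝ) + 1)) < t := by
    refine ⟨N, ?_⟩
    rw [hconv]
    calc (1/2:ℝ) ^ (N + 1) ≤ (1/2:ℝ) ^ N :=
          pow_le_pow_of_le_one (by norm_num) (by norm_num) (Nat.le_succ N)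
      _ < t := hN
  classical
  obtain ⟨m, hm, hmin⟩ : ∃ m : ℕ, (2:ℝ) ^ (-((m:ℝ) + 1)) < t ∧
      ∀ k < m, ¬ ((2:ℝ) ^ (-((k:ℝ) + 1)) < t) :=
    ⟨Nat.find hex, Nat.find_spec hex, fun k hk => Nat.find_min hex hk⟩
  set f : ℕ → ℝ≥0∞ := fun k =>
    {k : ℕ | (2:ℝ) ^ (-((k:ℝ) + 1)) < t}.indicator
      (fun k => ENNReal.ofReal ((2:ℝ) ^ (-((k:ℝ) + 1) * p))) k
    with hf
  have hzero : ∀ k < m, f k = 0 := by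
    intro k hk
    have hkm : k ∉ {k : ℕ | (2:ℝ) ^ (-((k:ℝ) + 1)) < t} := hmin k hk
    rw [hf]
    exact Set.indicator_of_notMem hkm _
  have hsum : ∑' k, f k = ∑' i, f (i + m) := by
    have h := Summable.sum_add_tsum_nat_add' (f := f) (k := m) ENNReal.summable
    rw [← h, Finset.sum_eq_zero (fun k hk => hzero k (Finset.mem_range.mp hk)), zero_add]
  have hterm : ∀ i : ℕ, f (i + m) ≤
      ENNReal.ofReal ((2:ℝ) ^ (-((m:ℝ) + 1) * p)) * (ENNReal.ofReal ((2:ℝ) ^ (-p))) ^ i := by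
    intro i
    have key : (2:ℝ) ^ (-(((i + m : ℕ):ℝ) + 1) * p)
        = (2:ℝ) ^ (-((m:ℝ) + 1) * p) * ((2:ℝ) ^ (-p)) ^ i := by
      rw [← Real.rpow_natCast ((2:ℝ) ^ (-p)) i, ← Real.rpow_mul h2.le, ← Real.rpow_add h2]
      congr 1; push_cast; ring
    have h1 : f (i + m) ≤ ENNReal.ofReal ((2:ℝ) ^ (-(((i + m : ℕ):ℝ) + 1) * p)) := by
      rw [hf]
      exact Set.indicator_le' (fun _ _ => le_rfl) (fun _ _ => zero_le) _
    refine h1.trans_eq ?_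
    rw [key, ENNReal.ofReal_mul (Real.rpow_nonneg h2.le _),
      ENNReal.ofReal_pow (Real.rpow_nonneg h2.le _)]
  calc ENNReal.ofReal (p / 2) * ∑' k, f k
      = ENNReal.ofReal (p / 2) * ∑' i, f (i + m) := by rw [hsum]
    _ ≤ ENNReal.ofReal (p / 2) * ∑' i,
          ENNReal.ofReal ((2:ℝ) ^ (-((m:ℝ) + 1) * p)) * (ENNReal.ofReal ((2:ℝ) ^ (-p))) ^ i :=
        mul_le_mul_right (ENNReal.tsum_le_tsum hterm) _
    _ = ENNReal.ofReal (p / 2) * (ENNReal.ofReal ((2:ℝ) ^ (-((m:ℝ) + 1) * p)) *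
          (1 - ENNReal.ofReal ((2:ℝ) ^ (-p)))⁻¹) := by
        rw [ENNReal.tsum_mul_left, ENNReal.tsum_geometric]
    _ = ENNReal.ofReal (p / 2 * ((2:ℝ) ^ (-((m:ℝ) + 1) * p) * (1 - (2:ℝ) ^ (-p))⁻¹)) := by
        rw [show (1 : ℝ≥0∞) - ENNReal.ofReal ((2:ℝ) ^ (-p))
            = ENNReal.ofReal (1 - (2:ℝ) ^ (-p)) by
          rw [ENNReal.ofReal_sub _ (Real.rpow_nonneg h2.le _), ENNReal.ofReal_one],
          ← ENNReal.ofReal_inv_of_pos hgeo_pos,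
          ← ENNReal.ofReal_mul (Real.rpow_nonneg h2.le _),
          ← ENNReal.ofReal_mul (by linarith : (0:ℝ) ≤ p / 2)]
    _ ≤ ENNReal.ofReal (t ^ p) := by
        refine ENNReal.ofReal_le_ofReal ?_
        have hA : (2:ℝ) ^ (-((m:ℝ) + 1) * p) ≤ t ^ p := by
          rw [Real.rpow_mul h2.le]
          exact Real.rpow_le_rpow (Real.rpow_nonneg h2.le _) hm.le hp0.le
        have hAnn : (0:ℝ) ≤ (2:ℝ) ^ (-((m:ℝ) + 1) * p) := Real.rpow_nonneg h2.le _
        have hc1 : p / 2 * (1 - (2:ℝ) ^ (-p))⁻¹ ≤ 1 := by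
          rw [← div_eq_mul_inv]
          exact (div_le_one hgeo_pos).mpr (bern hp0 hp1)
        have hcnn : (0:ℝ) ≤ (1 - (2:ℝ) ^ (-p))⁻¹ := by positivity
        calc p / 2 * ((2:ℝ) ^ (-((m:ℝ) + 1) * p) * (1 - (2:ℝ) ^ (-p))⁻¹)
            = (p / 2 * (1 - (2:ℝ) ^ (-p))⁻¹) * (2:ℝ) ^ (-((m:ℝ) + 1) * p) := by ring
          _ ≤ 1 * (t ^ p) := mul_le_mul hc1 hA hAnn zero_le_one
          _ = t ^ p := one_mul _
private lemma core {p : ℝ} (hp0 : 0 < p) (hp1 : p < 1) {n : ℕ}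
    (z : EuclideanSpace ℝ (Fin n)) :
    ENNReal.ofReal (p / 2) * ∑' k : ℕ, ENNReal.ofReal ((2:ℝ) ^ (-((k:ℝ) + 1) * p)) *
        (ball (0 : EuclideanSpace ℝ (Fin n)) (1 - 2 ^ (-((k:ℝ) + 1)))).indicator
          (fun _ => (1:ℝ≥0∞)) z
      ≤ ENNReal.ofReal ((1 - ‖z‖ ^ 2) ^ (p / 2) * (1 - ‖z‖ ^ 2) ^ (p / 2)) := by
  have h2 : (0:ℝ) < 2 := two_pos
  have hterm : ∀ k : ℕ, ENNReal.ofReal ((2:ℝ) ^ (-((k:ℝ) + 1) * p)) *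
      (ball (0 : EuclideanSpace ℝ (Fin n)) (1 - 2 ^ (-((k:ℝ) + 1)))).indicator
        (fun _ => (1:ℝ≥0∞)) z
      = {k : ℕ | (2:ℝ) ^ (-((k:ℝ) + 1)) < 1 - ‖z‖}.indicator
          (fun k => ENNReal.ofReal ((2:ℝ) ^ (-((k:ℝ) + 1) * p))) k := by
    intro k
    by_cases hzk : z ∈ ball (0 : EuclideanSpace ℝ (Fin n)) (1 - 2 ^ (-((k:ℝ) + 1)))
    · rw [Set.indicator_of_mem hzk, mul_one]
      have hk : k ∈ {k : ℕ | (2:ℝ) ^ (-((k:ℝ) + 1)) < 1 - ‖z‖} := by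
        rw [mem_ball_zero_iff] at hzk
        simp only [Set.mem_setOf_eq]; linarith
      rw [Set.indicator_of_mem hk]
    · rw [Set.indicator_of_notMem hzk, mul_zero]
      have hk : k ∉ {k : ℕ | (2:ℝ) ^ (-((k:ℝ) + 1)) < 1 - ‖z‖} := by
        rw [mem_ball_zero_iff] at hzk
        push_neg at hzk
        simp only [Set.mem_setOf_eq, not_lt]; linarith
      rw [Set.indicator_of_notMem hk]
  rw [tsum_congr hterm]
  by_cases hz : ‖z‖ < 1
  · refine (tailSum hp0 hp1 (by linarith : (0:ℝ) < 1 - ‖z‖)).trans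
      (ENNReal.ofReal_le_ofReal ?_)
    have hz0 : (0:ℝ) ≤ ‖z‖ := norm_nonneg z
    have hbase : (0:ℝ) < 1 - ‖z‖ ^ 2 := by nlinarith
    have hle : 1 - ‖z‖ ≤ 1 - ‖z‖ ^ 2 := by nlinarith
    rw [← Real.rpow_add hbase]
    have hpp : p / 2 + p / 2 = p := by ring
    rw [hpp]
    exact Real.rpow_le_rpow (by linarith) hle hp0.le
  · push_neg at hz
    have hzero : ∀ k : ℕ, {k : ℕ | (2:ℝ) ^ (-((k:ℝ) + 1)) < 1 - ‖z‖}.indicator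
        (fun k => ENNReal.ofReal ((2:ℝ) ^ (-((k:ℝ) + 1) * p))) k = 0 := by
      intro k
      refine Set.indicator_of_notMem ?_ _
      simp only [Set.mem_setOf_eq, not_lt]
      have := Real.rpow_pos_of_pos h2 (-((k:ℝ) + 1))
      linarith
    rw [tsum_congr hzero, tsum_zero, mul_zero]
    exact zero_le

private lemma claim2 {p : ℝ} (hp0 : 0 < p) (hp1 : p < 1) {n : ℕ}
    {x y : EuclideanSpace ℝ (Fin n)} (hxy : ‖x‖ ≤ ‖y‖) :
    ENNReal.ofReal (p / 2) * ∑' k : ℕ, ENNReal.ofReal ((2:ℝ) ^ (-((k:ℝ) + 1) * p)) *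
        ((ball (0 : EuclideanSpace ℝ (Fin n)) (1 - 2 ^ (-((k:ℝ) + 1)))).indicator
            (fun _ => (1:ℝ≥0∞)) x *
          (ball (0 : EuclideanSpace ℝ (Fin n)) (1 - 2 ^ (-((k:ℝ) + 1)))).indicator
            (fun _ => (1:ℝ≥0∞)) y)
      ≤ ENNReal.ofReal ((1 - ‖x‖ ^ 2) ^ (p / 2) * (1 - ‖y‖ ^ 2) ^ (p / 2)) := by
  have hIxy : ∀ k : ℕ,
      (ball (0 : EuclideanSpace ℝ (Fin n)) (1 - 2 ^ (-((k:ℝ) + 1)))).indicator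
          (fun _ => (1:ℝ≥0∞)) x *
        (ball (0 : EuclideanSpace ℝ (Fin n)) (1 - 2 ^ (-((k:ℝ) + 1)))).indicator
          (fun _ => (1:ℝ≥0∞)) y
      = (ball (0 : EuclideanSpace ℝ (Fin n)) (1 - 2 ^ (-((k:ℝ) + 1)))).indicator
          (fun _ => (1:ℝ≥0∞)) y := by
    intro k
    by_cases hyk : y ∈ ball (0 : EuclideanSpace ℝ (Fin n)) (1 - 2 ^ (-((k:ℝ) + 1)))
    · have hxk : x ∈ ball (0 : EuclideanSpace ℝ (Fin n)) (1 - 2 ^ (-((k:ℝ) + 1))) := by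
        rw [mem_ball_zero_iff] at hyk ⊢
        exact lt_of_le_of_lt hxy hyk
      rw [Set.indicator_of_mem hxk, Set.indicator_of_mem hyk, one_mul]
    · rw [Set.indicator_of_notMem hyk, mul_zero]
  have hre : ∀ k : ℕ, ENNReal.ofReal ((2:ℝ) ^ (-((k:ℝ) + 1) * p)) *
        ((ball (0 : EuclideanSpace ℝ (Fin n)) (1 - 2 ^ (-((k:ℝ) + 1)))).indicator
            (fun _ => (1:ℝ≥0∞)) x *
          (ball (0 : EuclideanSpace ℝ (Fin n)) (1 - 2 ^ (-((k:ℝ) + 1)))).indicator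
            (fun _ => (1:ℝ≥0∞)) y)
      = ENNReal.ofReal ((2:ℝ) ^ (-((k:ℝ) + 1) * p)) *
        (ball (0 : EuclideanSpace ℝ (Fin n)) (1 - 2 ^ (-((k:ℝ) + 1)))).indicator
          (fun _ => (1:ℝ≥0∞)) y := fun k => by rw [hIxy k]
  rw [tsum_congr hre]
  by_cases hy : ‖y‖ < 1
  · refine (core hp0 hp1 y).trans (ENNReal.ofReal_le_ofReal ?_)
    have hy0 : (0:ℝ) ≤ ‖y‖ := norm_nonneg y
    have hx0 : (0:ℝ) ≤ ‖x‖ := norm_nonneg x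
    have h1 : (0:ℝ) ≤ 1 - ‖y‖ ^ 2 := by nlinarith
    have h2 : 1 - ‖y‖ ^ 2 ≤ 1 - ‖x‖ ^ 2 := by nlinarith
    exact mul_le_mul_of_nonneg_right
      (Real.rpow_le_rpow h1 h2 (by linarith)) (Real.rpow_nonneg h1 _)
  · push_neg at hy
    have hzero : ∀ k : ℕ, ENNReal.ofReal ((2:ℝ) ^ (-((k:ℝ) + 1) * p)) *
        (ball (0 : EuclideanSpace ℝ (Fin n)) (1 - 2 ^ (-((k:ℝ) + 1)))).indicator
          (fun _ => (1:ℝ≥0∞)) y = 0 := by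
      intro k
      have hyk : y ∉ ball (0 : EuclideanSpace ℝ (Fin n)) (1 - 2 ^ (-((k:ℝ) + 1))) := by
        rw [mem_ball_zero_iff]
        have := Real.rpow_pos_of_pos (two_pos) (-((k:ℝ) + 1))
        push_neg
        linarith
      rw [Set.indicator_of_notMem hyk, mul_zero]
    rw [tsum_congr hzero, tsum_zero, mul_zero]
    exact zero_le

private lemma restrict_ball_eq_indicator {n : ℕ} {r : ℝ} (hr : r ≤ 1)
    (g : EuclideanSpace ℝ (Fin n) → ℝ≥0∞) :
    (∫⁻ x in ball (0 : EuclideanSpace ℝ (Fin n)) r, g x)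
      = ∫⁻ x in ball (0 : EuclideanSpace ℝ (Fin n)) 1,
          (ball (0 : EuclideanSpace ℝ (Fin n)) r).indicator g x := by
  rw [lintegral_indicator measurableSet_ball, Measure.restrict_restrict measurableSet_ball,
    inter_eq_self_of_subset_left (ball_subset_ball hr)]
private lemma radius_le_one (k : ℕ) : (1 : ℝ) - 2 ^ (-((k:ℝ) + 1)) ≤ 1 := by
  have := Real.rpow_pos_of_pos (two_pos) (-((k:ℝ) + 1))
  linarith

private lemma boundA {n : ℕ} {α : ℝ} (hα1 : 1 < α) (hα2 : α < 2)
    (v : EuclideanSpace ℝ (Fin n) → ℝ) (hv : Measurable v) :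
    ENNReal.ofReal ((α - 1) / 2) *
        ∑' k : ℕ, ENNReal.ofReal ((2:ℝ) ^ (-((k:ℝ) + 1) * (α - 1))) *
          ∫⁻ x in ball (0 : EuclideanSpace ℝ (Fin n)) (1 - 2 ^ (-((k:ℝ) + 1))),
            ENNReal.ofReal ((v x) ^ 2)
      ≤ ∫⁻ x in ball (0 : EuclideanSpace ℝ (Fin n)) 1,
          ENNReal.ofReal ((v x) ^ 2 * ((1 - ‖x‖ ^ 2) ^ ((α - 1) / 2)) ^ 2) := by
  have hp0 : 0 < α - 1 := by linarith
  have hp1 : α - 1 < 1 := by linarith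
  have hmeasv : Measurable fun x : EuclideanSpace ℝ (Fin n) =>
      ENNReal.ofReal ((v x) ^ 2) := (ENNReal.measurable_ofReal.comp (hv.pow_const 2))
  have hmeas : ∀ k : ℕ, AEMeasurable
      (fun x : EuclideanSpace ℝ (Fin n) =>
        ENNReal.ofReal ((2:ℝ) ^ (-((k:ℝ) + 1) * (α - 1))) *
          (ball (0 : EuclideanSpace ℝ (Fin n)) (1 - 2 ^ (-((k:ℝ) + 1)))).indicator
            (fun x => ENNReal.ofReal ((v x) ^ 2)) x)
      ((volume : Measure (EuclideanSpace ℝ (Fin n))).restrict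
        (ball (0 : EuclideanSpace ℝ (Fin n)) 1)) := fun k =>
    (measurable_const.mul (hmeasv.indicator measurableSet_ball)).aemeasurable
  calc ENNReal.ofReal ((α - 1) / 2) *
        ∑' k : ℕ, ENNReal.ofReal ((2:ℝ) ^ (-((k:ℝ) + 1) * (α - 1))) *
          ∫⁻ x in ball (0 : EuclideanSpace ℝ (Fin n)) (1 - 2 ^ (-((k:ℝ) + 1))),
            ENNReal.ofReal ((v x) ^ 2)
      = ENNReal.ofReal ((α - 1) / 2) *
        ∑' k : ℕ, ∫⁻ x in ball (0 : EuclideanSpace ℝ (Fin n)) 1,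
          ENNReal.ofReal ((2:ℝ) ^ (-((k:ℝ) + 1) * (α - 1))) *
            (ball (0 : EuclideanSpace ℝ (Fin n)) (1 - 2 ^ (-((k:ℝ) + 1)))).indicator
              (fun x => ENNReal.ofReal ((v x) ^ 2)) x := by
        congr 1
        refine tsum_congr fun k => ?_
        rw [restrict_ball_eq_indicator (radius_le_one k),
          lintegral_const_mul' _ _ ENNReal.ofReal_ne_top]
    _ = ENNReal.ofReal ((α - 1) / 2) *
        ∫⁻ x in ball (0 : EuclideanSpace ℝ (Fin n)) 1,
          ∑' k : ℕ, ENNReal.ofReal ((2:ℝ) ^ (-((k:ℝ) + 1) * (α - 1))) *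
            (ball (0 : EuclideanSpace ℝ (Fin n)) (1 - 2 ^ (-((k:ℝ) + 1)))).indicator
              (fun x => ENNReal.ofReal ((v x) ^ 2)) x := by
        rw [lintegral_tsum hmeas]
    _ = ∫⁻ x in ball (0 : EuclideanSpace ℝ (Fin n)) 1,
          ENNReal.ofReal ((α - 1) / 2) *
          ∑' k : ℕ, ENNReal.ofReal ((2:ℝ) ^ (-((k:ℝ) + 1) * (α - 1))) *
            (ball (0 : EuclideanSpace ℝ (Fin n)) (1 - 2 ^ (-((k:ℝ) + 1)))).indicator
              (fun x => ENNReal.ofReal ((v x) ^ 2)) x := by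
        rw [lintegral_const_mul' _ _ ENNReal.ofReal_ne_top]
    _ ≤ ∫⁻ x in ball (0 : EuclideanSpace ℝ (Fin n)) 1,
          ENNReal.ofReal ((v x) ^ 2 * ((1 - ‖x‖ ^ 2) ^ ((α - 1) / 2)) ^ 2) := by
        refine lintegral_mono fun x => ?_
        have e1 : ∀ k : ℕ, ENNReal.ofReal ((2:ℝ) ^ (-((k:ℝ) + 1) * (α - 1))) *
            (ball (0 : EuclideanSpace ℝ (Fin n)) (1 - 2 ^ (-((k:ℝ) + 1)))).indicator
              (fun x => ENNReal.ofReal ((v x) ^ 2)) x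
            = (ENNReal.ofReal ((2:ℝ) ^ (-((k:ℝ) + 1) * (α - 1))) *
              (ball (0 : EuclideanSpace ℝ (Fin n)) (1 - 2 ^ (-((k:ℝ) + 1)))).indicator
                (fun _ => (1:ℝ≥0∞)) x) * ENNReal.ofReal ((v x) ^ 2) := by
          intro k
          rw [ind_mul, mul_assoc]
        rw [tsum_congr e1, ENNReal.tsum_mul_right, ← mul_assoc]
        have e2 : ENNReal.ofReal ((v x) ^ 2 * ((1 - ‖x‖ ^ 2) ^ ((α - 1) / 2)) ^ 2)
            = ENNReal.ofReal (((1 - ‖x‖ ^ 2) ^ ((α - 1) / 2)) ^ 2) *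
              ENNReal.ofReal ((v x) ^ 2) := by
          rw [mul_comm, ENNReal.ofReal_mul (sq_nonneg _)]
        rw [e2]
        refine mul_le_mul_left ?_ _
        have e3 : ((1 - ‖x‖ ^ 2) ^ ((α - 1) / 2)) ^ 2
            = (1 - ‖x‖ ^ 2) ^ ((α - 1) / 2) * (1 - ‖x‖ ^ 2) ^ ((α - 1) / 2) := by
          rw [pow_two]
        rw [e3]
        exact core hp0 hp1 x
private lemma boundB {n : ℕ} {α : ℝ} (hα1 : 1 < α) (hα2 : α < 2)
    (v : EuclideanSpace ℝ (Fin n) → ℝ) (hv : Measurable v) :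
    ENNReal.ofReal ((α - 1) / 2) *
        ∑' k : ℕ, ENNReal.ofReal ((2:ℝ) ^ (-((k:ℝ) + 1) * (α - 1))) *
          ∫⁻ x in ball (0 : EuclideanSpace ℝ (Fin n)) (1 - 2 ^ (-((k:ℝ) + 1))),
            ∫⁻ y in ball (0 : EuclideanSpace ℝ (Fin n)) (1 - 2 ^ (-((k:ℝ) + 1))),
              ENNReal.ofReal ((v x - v y) ^ 2 / ‖x - y‖ ^ ((n : ℝ) + α))
      ≤ ∫⁻ x in ball (0 : EuclideanSpace ℝ (Fin n)) 1,
          ∫⁻ y in ball (0 : EuclideanSpace ℝ (Fin n)) 1,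
            ENNReal.ofReal ((v x - v y) ^ 2 *
              ((1 - ‖x‖ ^ 2) ^ ((α - 1) / 2) * (1 - ‖y‖ ^ 2) ^ ((α - 1) / 2)) /
              ‖x - y‖ ^ ((n : ℝ) + α)) := by
  have hp0 : 0 < α - 1 := by linarith
  have hp1 : α - 1 < 1 := by linarith
  have hind : ∀ k : ℕ, Measurable
      ((ball (0 : EuclideanSpace ℝ (Fin n)) (1 - 2 ^ (-((k:ℝ) + 1)))).indicator
        (fun _ => (1:ℝ≥0∞))) := fun k => measurable_const.indicator measurableSet_ball
  have hmeasF : Measurable (fun q : (EuclideanSpace ℝ (Fin n)) × (EuclideanSpace ℝ (Fin n)) =>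
      ENNReal.ofReal ((v q.1 - v q.2) ^ 2 / ‖q.1 - q.2‖ ^ ((n : ℝ) + α))) := by
    apply ENNReal.measurable_ofReal.comp
    exact (((hv.comp measurable_fst).sub (hv.comp measurable_snd)).pow_const 2).div
      ((measurable_fst.sub measurable_snd).norm.pow measurable_const)
  have hjoint : ∀ k : ℕ, Measurable
      (fun q : (EuclideanSpace ℝ (Fin n)) × (EuclideanSpace ℝ (Fin n)) =>
        (ENNReal.ofReal ((2:ℝ) ^ (-((k:ℝ) + 1) * (α - 1))) *
          ((ball (0 : EuclideanSpace ℝ (Fin n)) (1 - 2 ^ (-((k:ℝ) + 1)))).indicator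
              (fun _ => (1:ℝ≥0∞)) q.1 *
            (ball (0 : EuclideanSpace ℝ (Fin n)) (1 - 2 ^ (-((k:ℝ) + 1)))).indicator
              (fun _ => (1:ℝ≥0∞)) q.2)) *
          ENNReal.ofReal ((v q.1 - v q.2) ^ 2 / ‖q.1 - q.2‖ ^ ((n : ℝ) + α))) := fun k =>
    (measurable_const.mul (((hind k).comp measurable_fst).mul
      ((hind k).comp measurable_snd))).mul hmeasF
  have hmeasB : ∀ k : ℕ, AEMeasurable
      (fun x : EuclideanSpace ℝ (Fin n) =>
        ∫⁻ y in ball (0 : EuclideanSpace ℝ (Fin n)) 1,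
          (ENNReal.ofReal ((2:ℝ) ^ (-((k:ℝ) + 1) * (α - 1))) *
            ((ball (0 : EuclideanSpace ℝ (Fin n)) (1 - 2 ^ (-((k:ℝ) + 1)))).indicator
                (fun _ => (1:ℝ≥0∞)) x *
              (ball (0 : EuclideanSpace ℝ (Fin n)) (1 - 2 ^ (-((k:ℝ) + 1)))).indicator
                (fun _ => (1:ℝ≥0∞)) y)) *
            ENNReal.ofReal ((v x - v y) ^ 2 / ‖x - y‖ ^ ((n : ℝ) + α)))
      ((volume : Measure (EuclideanSpace ℝ (Fin n))).restrict
        (ball (0 : EuclideanSpace ℝ (Fin n)) 1)) := fun k =>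
    (Measurable.lintegral_prod_right' (hjoint k)).aemeasurable
  have hinner : ∀ (x : EuclideanSpace ℝ (Fin n)) (k : ℕ), AEMeasurable
      (fun y : EuclideanSpace ℝ (Fin n) =>
        (ENNReal.ofReal ((2:ℝ) ^ (-((k:ℝ) + 1) * (α - 1))) *
          ((ball (0 : EuclideanSpace ℝ (Fin n)) (1 - 2 ^ (-((k:ℝ) + 1)))).indicator
              (fun _ => (1:ℝ≥0∞)) x *
            (ball (0 : EuclideanSpace ℝ (Fin n)) (1 - 2 ^ (-((k:ℝ) + 1)))).indicator
              (fun _ => (1:ℝ≥0∞)) y)) *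
          ENNReal.ofReal ((v x - v y) ^ 2 / ‖x - y‖ ^ ((n : ℝ) + α)))
      ((volume : Measure (EuclideanSpace ℝ (Fin n))).restrict
        (ball (0 : EuclideanSpace ℝ (Fin n)) 1)) := by
    intro x k
    refine Measurable.aemeasurable ?_
    refine (measurable_const.mul (measurable_const.mul (hind k))).mul ?_
    apply ENNReal.measurable_ofReal.comp
    exact ((measurable_const.sub hv).pow_const 2).div
      ((measurable_const.sub measurable_id).norm.pow measurable_const)
  calc ENNReal.ofReal ((α - 1) / 2) *
        ∑' k : ℕ, ENNReal.ofReal ((2:ℝ) ^ (-((k:ℝ) + 1) * (α - 1))) *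
          ∫⁻ x in ball (0 : EuclideanSpace ℝ (Fin n)) (1 - 2 ^ (-((k:ℝ) + 1))),
            ∫⁻ y in ball (0 : EuclideanSpace ℝ (Fin n)) (1 - 2 ^ (-((k:ℝ) + 1))),
              ENNReal.ofReal ((v x - v y) ^ 2 / ‖x - y‖ ^ ((n : ℝ) + α))
      = ENNReal.ofReal ((α - 1) / 2) *
        ∑' k : ℕ, ∫⁻ x in ball (0 : EuclideanSpace ℝ (Fin n)) 1,
          ∫⁻ y in ball (0 : EuclideanSpace ℝ (Fin n)) 1,
            (ENNReal.ofReal ((2:ℝ) ^ (-((k:ℝ) + 1) * (α - 1))) *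
              ((ball (0 : EuclideanSpace ℝ (Fin n)) (1 - 2 ^ (-((k:ℝ) + 1)))).indicator
                  (fun _ => (1:ℝ≥0∞)) x *
                (ball (0 : EuclideanSpace ℝ (Fin n)) (1 - 2 ^ (-((k:ℝ) + 1)))).indicator
                  (fun _ => (1:ℝ≥0∞)) y)) *
              ENNReal.ofReal ((v x - v y) ^ 2 / ‖x - y‖ ^ ((n : ℝ) + α)) := by
        congr 1
        refine tsum_congr fun k => ?_
        rw [restrict_ball_eq_indicator (radius_le_one k),
          ← lintegral_const_mul' _ _ ENNReal.ofReal_ne_top]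
        refine lintegral_congr fun x => ?_
        rw [ind_mul, restrict_ball_eq_indicator (radius_le_one k), ← mul_assoc,
          ← lintegral_const_mul' _ _
            (ENNReal.mul_ne_top ENNReal.ofReal_ne_top (ind_ne_top _ x))]
        refine lintegral_congr fun y => ?_
        rw [ind_mul _ (fun y => ENNReal.ofReal ((v x - v y) ^ 2 / ‖x - y‖ ^ ((n:ℝ) + α))) y]
        ring
    _ = ENNReal.ofReal ((α - 1) / 2) *
        ∫⁻ x in ball (0 : EuclideanSpace ℝ (Fin n)) 1,
          ∑' k : ℕ, ∫⁻ y in ball (0 : EuclideanSpace ℝ (Fin n)) 1,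
            (ENNReal.ofReal ((2:ℝ) ^ (-((k:ℝ) + 1) * (α - 1))) *
              ((ball (0 : EuclideanSpace ℝ (Fin n)) (1 - 2 ^ (-((k:ℝ) + 1)))).indicator
                  (fun _ => (1:ℝ≥0∞)) x *
                (ball (0 : EuclideanSpace ℝ (Fin n)) (1 - 2 ^ (-((k:ℝ) + 1)))).indicator
                  (fun _ => (1:ℝ≥0∞)) y)) *
              ENNReal.ofReal ((v x - v y) ^ 2 / ‖x - y‖ ^ ((n : ℝ) + α)) := by
        rw [lintegral_tsum hmeasB]
    _ = ENNReal.ofReal ((α - 1) / 2) *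
        ∫⁻ x in ball (0 : EuclideanSpace ℝ (Fin n)) 1,
          ∫⁻ y in ball (0 : EuclideanSpace ℝ (Fin n)) 1,
            ∑' k : ℕ,
            (ENNReal.ofReal ((2:ℝ) ^ (-((k:ℝ) + 1) * (α - 1))) *
              ((ball (0 : EuclideanSpace ℝ (Fin n)) (1 - 2 ^ (-((k:ℝ) + 1)))).indicator
                  (fun _ => (1:ℝ≥0∞)) x *
                (ball (0 : EuclideanSpace ℝ (Fin n)) (1 - 2 ^ (-((k:ℝ) + 1)))).indicator
                  (fun _ => (1:ℝ≥0∞)) y)) *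
              ENNReal.ofReal ((v x - v y) ^ 2 / ‖x - y‖ ^ ((n : ℝ) + α)) := by
        congr 1
        refine lintegral_congr fun x => ?_
        rw [lintegral_tsum (hinner x)]
    _ = ∫⁻ x in ball (0 : EuclideanSpace ℝ (Fin n)) 1,
          ∫⁻ y in ball (0 : EuclideanSpace ℝ (Fin n)) 1,
            ENNReal.ofReal ((α - 1) / 2) * ∑' k : ℕ,
            (ENNReal.ofReal ((2:ℝ) ^ (-((k:ℝ) + 1) * (α - 1))) *
              ((ball (0 : EuclideanSpace ℝ (Fin n)) (1 - 2 ^ (-((k:ℝ) + 1)))).indicator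
                  (fun _ => (1:ℝ≥0∞)) x *
                (ball (0 : EuclideanSpace ℝ (Fin n)) (1 - 2 ^ (-((k:ℝ) + 1)))).indicator
                  (fun _ => (1:ℝ≥0∞)) y)) *
              ENNReal.ofReal ((v x - v y) ^ 2 / ‖x - y‖ ^ ((n : ℝ) + α)) := by
        rw [← lintegral_const_mul' _ _ ENNReal.ofReal_ne_top]
        refine lintegral_congr fun x => ?_
        rw [← lintegral_const_mul' _ _ ENNReal.ofReal_ne_top]
    _ ≤ ∫⁻ x in ball (0 : EuclideanSpace ℝ (Fin n)) 1,
          ∫⁻ y in ball (0 : EuclideanSpace ℝ (Fin n)) 1,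
            ENNReal.ofReal ((v x - v y) ^ 2 *
              ((1 - ‖x‖ ^ 2) ^ ((α - 1) / 2) * (1 - ‖y‖ ^ 2) ^ ((α - 1) / 2)) /
              ‖x - y‖ ^ ((n : ℝ) + α)) := by
        refine lintegral_mono fun x => lintegral_mono fun y => ?_
        have hFnn : 0 ≤ (v x - v y) ^ 2 / ‖x - y‖ ^ ((n:ℝ) + α) :=
          div_nonneg (sq_nonneg _) (Real.rpow_nonneg (norm_nonneg _) _)
        have eR : (v x - v y) ^ 2 *
              ((1 - ‖x‖ ^ 2) ^ ((α - 1) / 2) * (1 - ‖y‖ ^ 2) ^ ((α - 1) / 2)) /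
              ‖x - y‖ ^ ((n : ℝ) + α)
            = ((1 - ‖x‖ ^ 2) ^ ((α - 1) / 2) * (1 - ‖y‖ ^ 2) ^ ((α - 1) / 2)) *
              ((v x - v y) ^ 2 / ‖x - y‖ ^ ((n : ℝ) + α)) := by
          ring
        rw [eR, ENNReal.ofReal_mul' hFnn, ENNReal.tsum_mul_right, ← mul_assoc]
        refine mul_le_mul_left ?_ _
        rcases le_total ‖x‖ ‖y‖ with h | h
        · exact claim2 hp0 hp1 h
        · have hsymm : ∀ k : ℕ, ENNReal.ofReal ((2:ℝ) ^ (-((k:ℝ) + 1) * (α - 1))) *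
              ((ball (0 : EuclideanSpace ℝ (Fin n)) (1 - 2 ^ (-((k:ℝ) + 1)))).indicator
                  (fun _ => (1:ℝ≥0∞)) x *
                (ball (0 : EuclideanSpace ℝ (Fin n)) (1 - 2 ^ (-((k:ℝ) + 1)))).indicator
                  (fun _ => (1:ℝ≥0∞)) y)
              = ENNReal.ofReal ((2:ℝ) ^ (-((k:ℝ) + 1) * (α - 1))) *
              ((ball (0 : EuclideanSpace ℝ (Fin n)) (1 - 2 ^ (-((k:ℝ) + 1)))).indicator
                  (fun _ => (1:ℝ≥0∞)) y *
                (ball (0 : EuclideanSpace ℝ (Fin n)) (1 - 2 ^ (-((k:ℝ) + 1)))).indicator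
                  (fun _ => (1:ℝ≥0∞)) x) := fun k => by ring
          rw [tsum_congr hsymm]
          refine (claim2 hp0 hp1 h).trans ?_
          rw [mul_comm ((1 - ‖y‖ ^ 2) ^ ((α - 1) / 2)) ((1 - ‖x‖ ^ 2) ^ ((α - 1) / 2))]

/-- Dyadic decomposition lower bound for the weighted form: for every measurable
`v`, with all integrals in `[0,∞]`,
`∫_B∫_B (v(x)-v(y))² w_n(x)w_n(y)/|x-y|^{n+α} dx dy + ∫_B v² w_n²
  ≥ ((α-1)/2) ∑_{k≥1} 2^{-k(α-1)} (∫_{B_k}∫_{B_k} (v(x)-v(y))²/|x-y|^{n+α} dx dy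
      + ∫_{B_k} v²)`,
where `w_n(x) = (1-|x|²)^{(α-1)/2}` and `B_k` is the ball of radius `1-2^{-k}`. -/
theorem weighted_form_dyadic_lower_bound (n : ℕ) (hn : 2 ≤ n) (α : ℝ)
    (hα1 : 1 < α) (hα2 : α < 2) (v : EuclideanSpace ℝ (Fin n) → ℝ)
    (hv : Measurable v) :
    (∫⁻ x in ball (0 : EuclideanSpace ℝ (Fin n)) 1,
        ∫⁻ y in ball (0 : EuclideanSpace ℝ (Fin n)) 1,
          ENNReal.ofReal ((v x - v y) ^ 2 *
            ((1 - ‖x‖ ^ 2) ^ ((α - 1) / 2) * (1 - ‖y‖ ^ 2) ^ ((α - 1) / 2)) /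
            ‖x - y‖ ^ ((n : ℝ) + α))) +
      (∫⁻ x in ball (0 : EuclideanSpace ℝ (Fin n)) 1,
        ENNReal.ofReal ((v x) ^ 2 * ((1 - ‖x‖ ^ 2) ^ ((α - 1) / 2)) ^ 2)) ≥
    ENNReal.ofReal ((α - 1) / 2) *
      ∑' k : ℕ, ENNReal.ofReal ((2 : ℝ) ^ (-((k : ℝ) + 1) * (α - 1))) *
        ((∫⁻ x in ball (0 : EuclideanSpace ℝ (Fin n)) (1 - 2 ^ (-((k : ℝ) + 1))),
            ∫⁻ y in ball (0 : EuclideanSpace ℝ (Fin n)) (1 - 2 ^ (-((k : ℝ) + 1))),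
              ENNReal.ofReal ((v x - v y) ^ 2 / ‖x - y‖ ^ ((n : ℝ) + α))) +
          ∫⁻ x in ball (0 : EuclideanSpace ℝ (Fin n)) (1 - 2 ^ (-((k : ℝ) + 1))),
            ENNReal.ofReal ((v x) ^ 2)) := by
  rw [ge_iff_le]
  calc ENNReal.ofReal ((α - 1) / 2) *
      ∑' k : ℕ, ENNReal.ofReal ((2 : ℝ) ^ (-((k : ℝ) + 1) * (α - 1))) *
        ((∫⁻ x in ball (0 : EuclideanSpace ℝ (Fin n)) (1 - 2 ^ (-((k : ℝ) + 1))),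
            ∫⁻ y in ball (0 : EuclideanSpace ℝ (Fin n)) (1 - 2 ^ (-((k : ℝ) + 1))),
              ENNReal.ofReal ((v x - v y) ^ 2 / ‖x - y‖ ^ ((n : ℝ) + α))) +
          ∫⁻ x in ball (0 : EuclideanSpace ℝ (Fin n)) (1 - 2 ^ (-((k : ℝ) + 1))),
            ENNReal.ofReal ((v x) ^ 2))
      = ENNReal.ofReal ((α - 1) / 2) *
        ((∑' k : ℕ, ENNReal.ofReal ((2 : ℝ) ^ (-((k : ℝ) + 1) * (α - 1))) *
          ∫⁻ x in ball (0 : EuclideanSpace ℝ (Fin n)) (1 - 2 ^ (-((k : ℝ) + 1))),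
            ∫⁻ y in ball (0 : EuclideanSpace ℝ (Fin n)) (1 - 2 ^ (-((k : ℝ) + 1))),
              ENNReal.ofReal ((v x - v y) ^ 2 / ‖x - y‖ ^ ((n : ℝ) + α))) +
         ∑' k : ℕ, ENNReal.ofReal ((2 : ℝ) ^ (-((k : ℝ) + 1) * (α - 1))) *
          ∫⁻ x in ball (0 : EuclideanSpace ℝ (Fin n)) (1 - 2 ^ (-((k : ℝ) + 1))),
            ENNReal.ofReal ((v x) ^ 2)) := by
        rw [← ENNReal.tsum_add]
        congr 1
        exact tsum_congr fun k => mul_add _ _ _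
    _ = ENNReal.ofReal ((α - 1) / 2) *
        (∑' k : ℕ, ENNReal.ofReal ((2 : ℝ) ^ (-((k : ℝ) + 1) * (α - 1))) *
          ∫⁻ x in ball (0 : EuclideanSpace ℝ (Fin n)) (1 - 2 ^ (-((k : ℝ) + 1))),
            ∫⁻ y in ball (0 : EuclideanSpace ℝ (Fin n)) (1 - 2 ^ (-((k : ℝ) + 1))),
              ENNReal.ofReal ((v x - v y) ^ 2 / ‖x - y‖ ^ ((n : ℝ) + α))) +
        ENNReal.ofReal ((α - 1) / 2) *
        (∑' k : ℕ, ENNReal.ofReal ((2 : ℝ) ^ (-((k : ℝ) + 1) * (α - 1))) *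
          ∫⁻ x in ball (0 : EuclideanSpace ℝ (Fin n)) (1 - 2 ^ (-((k : ℝ) + 1))),
            ENNReal.ofReal ((v x) ^ 2)) := mul_add _ _ _
    _ ≤ (∫⁻ x in ball (0 : EuclideanSpace ℝ (Fin n)) 1,
          ∫⁻ y in ball (0 : EuclideanSpace ℝ (Fin n)) 1,
            ENNReal.ofReal ((v x - v y) ^ 2 *
              ((1 - ‖x‖ ^ 2) ^ ((α - 1) / 2) * (1 - ‖y‖ ^ 2) ^ ((α - 1) / 2)) /
              ‖x - y‖ ^ ((n : ℝ) + α))) +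
        (∫⁻ x in ball (0 : EuclideanSpace ℝ (Fin n)) 1,
          ENNReal.ofReal ((v x) ^ 2 * ((1 - ‖x‖ ^ 2) ^ ((α - 1) / 2)) ^ 2)) :=
      add_le_add (boundB hα1 hα2 v hv) (boundA hα1 hα2 v hv)
end
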